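/- There exists a constant C > 0 such that for all ε ∈ (0,1): P(D₁ ≤ ε) ≤ C · ε. -/

import Mathlib

open MeasureTheory ProbabilityTheory Real Filter

/-- Density of the Beta distribution `β(u,v)` with respect to Lebesgue measure. -/
noncomputable def betaPDFReal (u v x : ℝ) : ℝ :=
  if 0 < x ∧ x < 1 then
    Real.Gamma (u + v) / (Real.Gamma u * Real.Gamma v) * x ^ (u - 1) * (1 - x) ^ (v - 1)
  else 0

/-- The Beta distribution `β(u,v)` on `ℝ`. -/
noncomputable def betaMeasure (u v : ℝ) : Measure ℝ :=
  volume.withDensity fun x => ENNReal.ofReal (_root_.betaPDFReal u v x)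

/-- Density of the generalized Gamma distribution `GG(u,v)` w.r.t. Lebesgue measure. -/
noncomputable def genGammaPDFReal (u v x : ℝ) : ℝ :=
  if 0 < x then v / Real.Gamma (u / v) * x ^ (u - 1) * Real.exp (-(x ^ v)) else 0

/-- The generalized Gamma distribution `GG(u,v)` on `ℝ`. -/
noncomputable def genGammaMeasure (u v : ℝ) : Measure ℝ :=
  volume.withDensity fun x => ENNReal.ofReal (genGammaPDFReal u v x)

/-- A density supported on `(0,∞)` and bounded by `M` on `(0,δ]` gives measure at most `M·δ`
to `(-∞, δ]`. -/
lemma aux_withDensity_Iic_le {f : ℝ → ℝ} {δ M : ℝ} (hδ : 0 ≤ δ) (hM : 0 ≤ M)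
    (h0 : ∀ x ≤ (0:ℝ), f x = 0) (hb : ∀ x ∈ Set.Ioc (0:ℝ) δ, f x ≤ M) :
    (volume.withDensity fun x => ENNReal.ofReal (f x)) (Set.Iic δ) ≤ ENNReal.ofReal (M * δ) := by
  rw [withDensity_apply _ measurableSet_Iic]
  have hsplit : Set.Iic δ = Set.Iic 0 ∪ Set.Ioc 0 δ := (Set.Iic_union_Ioc_eq_Iic hδ).symm
  rw [hsplit, lintegral_union measurableSet_Ioc (Set.Iic_disjoint_Ioc le_rfl)]
  have h1 : ∫⁻ x in Set.Iic (0:ℝ), ENNReal.ofReal (f x) = 0 := by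
    apply le_antisymm _ zero_le
    calc ∫⁻ x in Set.Iic (0:ℝ), ENNReal.ofReal (f x)
        ≤ ∫⁻ _x in Set.Iic (0:ℝ), (0:ENNReal) :=
          setLIntegral_mono' measurableSet_Iic (fun x hx => by simp [h0 x hx])
      _ = 0 := by simp
  have h2 : ∫⁻ x in Set.Ioc (0:ℝ) δ, ENNReal.ofReal (f x) ≤ ENNReal.ofReal (M * δ) := by
    calc ∫⁻ x in Set.Ioc (0:ℝ) δ, ENNReal.ofReal (f x)
        ≤ ∫⁻ _x in Set.Ioc (0:ℝ) δ, ENNReal.ofReal M :=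
          setLIntegral_mono' measurableSet_Ioc (fun x hx => ENNReal.ofReal_le_ofReal (hb x hx))
      _ = ENNReal.ofReal M * volume (Set.Ioc (0:ℝ) δ) := setLIntegral_const _ _
      _ = ENNReal.ofReal M * ENNReal.ofReal δ := by rw [Real.volume_Ioc]; norm_num
      _ = ENNReal.ofReal (M * δ) := (ENNReal.ofReal_mul hM).symm
  rw [h1, zero_add]
  exact h2

lemma aux_sqrt_two_pow (m : ℕ) : Real.sqrt ((2:ℝ) ^ m) = (Real.sqrt 2) ^ m := by
  induction m with
  | zero => simp
  | succ n ih =>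
      rw [pow_succ, pow_succ, Real.sqrt_mul (by positivity), ih]

lemma aux_geom_sum (m : ℕ) :
    ∑ k ∈ Finset.range m, (Real.sqrt 2) ^ k ≤ 3 * (Real.sqrt 2) ^ m := by
  have hs : (0:ℝ) ≤ Real.sqrt 2 := Real.sqrt_nonneg 2
  have hsq : Real.sqrt 2 * Real.sqrt 2 = 2 := Real.mul_self_sqrt (by norm_num)
  have h43 : (4:ℝ) ≤ 3 * Real.sqrt 2 := by nlinarith
  induction m with
  | zero => simp
  | succ n ih =>
      rw [Finset.sum_range_succ, pow_succ]
      have hp : (0:ℝ) < (Real.sqrt 2) ^ n := by positivity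
      nlinarith

set_option maxHeartbeats 1000000 in
/-- There is `C > 0` such that for all `ε ∈ (0,1)`, `P(D₁ ≤ ε) ≤ C * ε`,
where `D₁ = B₁B₂Z₃`. -/
theorem adam_bound {Ω : Type*} [MeasurableSpace Ω] (P : Measure Ω) [IsProbabilityMeasure P]
    (B₁ B₂ Z₃ : Ω → ℝ) (hB₁ : Measurable B₁) (hB₂ : Measurable B₂) (hZ₃ : Measurable Z₃)
    (hindep : iIndepFun ![B₁, B₂, Z₃] P)
    (hlaw₁ : P.map B₁ = _root_.betaMeasure 1 2)
    (hlaw₂ : P.map B₂ = _root_.betaMeasure 3 1)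
    (hlaw₃ : P.map Z₃ = genGammaMeasure 5 2) :
    ∃ C : ℝ, 0 < C ∧ ∀ ε : ℝ, 0 < ε → ε < 1 →
      P {ω | B₁ ω * B₂ ω * Z₃ ω ≤ ε} ≤ ENNReal.ofReal (C * ε) := by
  -- the constants
  set c₁ : ℝ := Real.Gamma (1 + 2) / (Real.Gamma 1 * Real.Gamma 2) with hc₁def
  set c₂ : ℝ := Real.Gamma (3 + 1) / (Real.Gamma 3 * Real.Gamma 1) with hc₂def
  set c₃ : ℝ := 2 / Real.Gamma (5 / 2) with hc₃def
  have hc₁ : 0 < c₁ := by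
    apply div_pos (Real.Gamma_pos_of_pos (by norm_num))
    exact mul_pos (Real.Gamma_pos_of_pos one_pos) (Real.Gamma_pos_of_pos two_pos)
  have hc₂ : 0 < c₂ := by
    apply div_pos (Real.Gamma_pos_of_pos (by norm_num))
    exact mul_pos (Real.Gamma_pos_of_pos (by norm_num)) (Real.Gamma_pos_of_pos one_pos)
  have hc₃ : 0 < c₃ := div_pos two_pos (Real.Gamma_pos_of_pos (by norm_num))
  set C₂ : ℝ := c₂ + c₃ + 1 with hC₂def
  have hC₂ : 0 < C₂ := by positivity
  have hC₂1 : 1 ≤ C₂ := by nlinarith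
  -- tail bounds for the three marginal laws
  have hbeta12 : ∀ δ : ℝ, 0 ≤ δ → _root_.betaMeasure 1 2 (Set.Iic δ) ≤ ENNReal.ofReal (c₁ * δ) := by
    intro δ hδ
    apply aux_withDensity_Iic_le hδ hc₁.le
    · intro x hx
      simp [_root_.betaPDFReal, not_lt.2 hx]
    · intro x hx
      simp only [_root_.betaPDFReal]
      by_cases h1 : x < 1
      · rw [if_pos ⟨hx.1, h1⟩]
        have : x ^ ((1:ℝ) - 1) = 1 := by norm_num
        rw [this]
        have : (1 - x) ^ ((2:ℝ) - 1) = 1 - x := by norm_num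
        rw [this, ← hc₁def]
        nlinarith [hx.1]
      · rw [if_neg (by tauto)]
        exact hc₁.le
  have hbeta31 : ∀ δ : ℝ, 0 ≤ δ → _root_.betaMeasure 3 1 (Set.Iic δ) ≤
      ENNReal.ofReal (c₂ * (δ * δ) * δ) := by
    intro δ hδ
    apply aux_withDensity_Iic_le hδ (by positivity)
    · intro x hx
      simp [_root_.betaPDFReal, not_lt.2 hx]
    · intro x hx
      simp only [_root_.betaPDFReal]
      by_cases h1 : x < 1
      · rw [if_pos ⟨hx.1, h1⟩]
        have e1 : (1 - x) ^ ((1:ℝ) - 1) = 1 := by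
          rw [show (1:ℝ) - 1 = 0 by norm_num, Real.rpow_zero]
        have e2 : x ^ ((3:ℝ) - 1) ≤ δ * δ := by
          rw [show (3:ℝ) - 1 = 2 by norm_num]
          have : x ^ (2:ℝ) ≤ δ ^ (2:ℝ) := by
            apply Real.rpow_le_rpow hx.1.le hx.2 (by norm_num)
          calc x ^ (2:ℝ) ≤ δ ^ (2:ℝ) := this
            _ = δ * δ := by
                rw [show (2:ℝ) = ((2:ℕ):ℝ) by norm_num, Real.rpow_natCast]; ring
        rw [e1, mul_one, ← hc₂def]
        have := mul_le_mul_of_nonneg_left e2 hc₂.le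
        linarith
      · rw [if_neg (by tauto)]
        positivity
  have hgg : ∀ δ : ℝ, 0 ≤ δ → δ ≤ 1 → genGammaMeasure 5 2 (Set.Iic δ) ≤
      ENNReal.ofReal (c₃ * (δ * δ) * δ) := by
    intro δ hδ hδ1
    apply aux_withDensity_Iic_le hδ (by positivity)
    · intro x hx
      simp [genGammaPDFReal, not_lt.2 hx]
    · intro x hx
      simp only [genGammaPDFReal, if_pos hx.1]
      have hexp : Real.exp (-(x ^ (2:ℝ))) ≤ 1 := by
        rw [Real.exp_le_one_iff]
        have : (0:ℝ) ≤ x ^ (2:ℝ) := Real.rpow_nonneg hx.1.le _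
        linarith
      have hx4 : x ^ ((5:ℝ) - 1) ≤ δ * δ := by
        rw [show (5:ℝ) - 1 = 4 by norm_num]
        have h1 : x ^ (4:ℝ) ≤ δ ^ (4:ℝ) := Real.rpow_le_rpow hx.1.le hx.2 (by norm_num)
        have h2 : δ ^ (4:ℝ) = (δ * δ) * (δ * δ) := by
          rw [show (4:ℝ) = ((4:ℕ):ℝ) by norm_num, Real.rpow_natCast]; ring
        have hδδ : δ * δ ≤ 1 := by nlinarith
        have h3 : (δ * δ) * (δ * δ) ≤ (δ * δ) * 1 :=
          mul_le_mul_of_nonneg_left hδδ (mul_nonneg hδ hδ)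
        exact le_trans (h1.trans_eq h2) (h3.trans_eq (mul_one _))
      have h5 : (0:ℝ) < 2 / Real.Gamma (5 / 2) := div_pos two_pos (Real.Gamma_pos_of_pos (by norm_num))
      calc 2 / Real.Gamma (5 / 2) * x ^ ((5:ℝ) - 1) * Real.exp (-(x ^ (2:ℝ)))
          ≤ 2 / Real.Gamma (5 / 2) * x ^ ((5:ℝ) - 1) * 1 := by
            apply mul_le_mul_of_nonneg_left hexp
            exact mul_nonneg h5.le (Real.rpow_nonneg hx.1.le _)
        _ = 2 / Real.Gamma (5 / 2) * x ^ ((5:ℝ) - 1) := mul_one _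
        _ ≤ c₃ * (δ * δ) := by
            rw [hc₃def]
            exact mul_le_mul_of_nonneg_left hx4 h5.le
  -- event-level tail bounds
  have hB1tail : ∀ δ : ℝ, 0 ≤ δ → P {ω | B₁ ω ≤ δ} ≤ ENNReal.ofReal (c₁ * δ) := by
    intro δ hδ
    have : P {ω | B₁ ω ≤ δ} = (P.map B₁) (Set.Iic δ) := by
      rw [Measure.map_apply hB₁ measurableSet_Iic]; rfl
    rw [this, hlaw₁]
    exact hbeta12 δ hδ
  have hB2tail : ∀ δ : ℝ, 0 ≤ δ → P {ω | B₂ ω ≤ δ} ≤ ENNReal.ofReal (c₂ * (δ * δ) * δ) := by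
    intro δ hδ
    have : P {ω | B₂ ω ≤ δ} = (P.map B₂) (Set.Iic δ) := by
      rw [Measure.map_apply hB₂ measurableSet_Iic]; rfl
    rw [this, hlaw₂]
    exact hbeta31 δ hδ
  have hZ3tail : ∀ δ : ℝ, 0 ≤ δ → δ ≤ 1 →
      P {ω | Z₃ ω ≤ δ} ≤ ENNReal.ofReal (c₃ * (δ * δ) * δ) := by
    intro δ hδ hδ1
    have : P {ω | Z₃ ω ≤ δ} = (P.map Z₃) (Set.Iic δ) := by
      rw [Measure.map_apply hZ₃ measurableSet_Iic]; rfl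
    rw [this, hlaw₃]
    exact hgg δ hδ hδ1
  -- tail bound for W = B₂ * Z₃
  have hWtail : ∀ a : ℝ, 0 ≤ a →
      P {ω | B₂ ω * Z₃ ω ≤ a} ≤ ENNReal.ofReal (C₂ * (a * Real.sqrt a)) := by
    intro a ha
    by_cases ha1 : a ≤ 1
    · have hsub : {ω | B₂ ω * Z₃ ω ≤ a} ⊆
          {ω | B₂ ω ≤ Real.sqrt a} ∪ {ω | Z₃ ω ≤ Real.sqrt a} := by
        intro ω hω
        simp only [Set.mem_setOf_eq] at hω
        by_contra h
        simp only [Set.mem_union, Set.mem_setOf_eq, not_or, not_le] at h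
        have := mul_lt_mul'' h.1 h.2 (Real.sqrt_nonneg a) (Real.sqrt_nonneg a)
        rw [Real.mul_self_sqrt ha] at this
        linarith
      have hs0 : 0 ≤ Real.sqrt a := Real.sqrt_nonneg a
      have hs1 : Real.sqrt a ≤ 1 := by
        rw [show (1:ℝ) = Real.sqrt 1 by simp]
        exact Real.sqrt_le_sqrt ha1
      have hss : Real.sqrt a * Real.sqrt a = a := Real.mul_self_sqrt ha
      calc P {ω | B₂ ω * Z₃ ω ≤ a}
          ≤ P {ω | B₂ ω ≤ Real.sqrt a} + P {ω | Z₃ ω ≤ Real.sqrt a} :=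
            le_trans (measure_mono hsub) (measure_union_le _ _)
        _ ≤ ENNReal.ofReal (c₂ * (Real.sqrt a * Real.sqrt a) * Real.sqrt a) +
            ENNReal.ofReal (c₃ * (Real.sqrt a * Real.sqrt a) * Real.sqrt a) :=
            add_le_add (hB2tail _ hs0) (hZ3tail _ hs0 hs1)
        _ = ENNReal.ofReal ((c₂ + c₃) * (a * Real.sqrt a)) := by
            rw [← ENNReal.ofReal_add (by positivity) (by positivity), hss]
            ring_nf
        _ ≤ ENNReal.ofReal (C₂ * (a * Real.sqrt a)) := by
            apply ENNReal.ofReal_le_ofReal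
            apply mul_le_mul_of_nonneg_right _ (by positivity)
            rw [hC₂def]; linarith
    · push_neg at ha1
      have h1 : P {ω | B₂ ω * Z₃ ω ≤ a} ≤ 1 := prob_le_one
      have h2 : (1:ℝ) ≤ C₂ * (a * Real.sqrt a) := by
        have hsa : (1:ℝ) ≤ Real.sqrt a := by
          rw [show (1:ℝ) = Real.sqrt 1 by simp]
          exact Real.sqrt_le_sqrt ha1.le
        have h1a : (1:ℝ) ≤ a * Real.sqrt a := by nlinarith
        have := mul_le_mul hC₂1 h1a one_pos.le hC₂.le
        linarith
      calc P {ω | B₂ ω * Z₃ ω ≤ a} ≤ 1 := h1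
        _ = ENNReal.ofReal 1 := by simp
        _ ≤ ENNReal.ofReal (C₂ * (a * Real.sqrt a)) := ENNReal.ofReal_le_ofReal h2
  -- independence of W and B₁
  have hmeas : ∀ i, Measurable (![B₁, B₂, Z₃] i) := by
    intro i; fin_cases i <;> assumption
  have hindW : IndepFun (fun ω => B₂ ω * Z₃ ω) B₁ P := by
    have h := hindep.indepFun_prodMk hmeas 1 2 0 (by decide) (by decide)
    have h' := h.comp (measurable_fst.mul measurable_snd) measurable_id
    exact h'
  have hprodmul : ∀ a b : ℝ, P ({ω | B₂ ω * Z₃ ω ≤ a} ∩ {ω | B₁ ω ≤ b}) =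
      P {ω | B₂ ω * Z₃ ω ≤ a} * P {ω | B₁ ω ≤ b} := by
    intro a b
    exact (indepFun_iff_measure_inter_preimage_eq_mul.1 hindW) (Set.Iic a) (Set.Iic b)
      measurableSet_Iic measurableSet_Iic
  -- the constant
  refine ⟨C₂ + c₁ + 12 * (C₂ * c₁), by positivity, ?_⟩
  intro ε hε hε1
  -- choice of K
  obtain ⟨K, hK1, hK2⟩ : ∃ K : ℕ, 1 ≤ (2:ℝ) ^ K * ε ∧ (2:ℝ) ^ K * ε ≤ 2 := by
    have hexK : ∃ n : ℕ, 1 ≤ (2:ℝ) ^ n * ε := by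
      obtain ⟨n, hn⟩ := pow_unbounded_of_one_lt (1 / ε) (one_lt_two (α := ℝ))
      exact ⟨n, by rw [div_lt_iff₀ hε] at hn; linarith⟩
    refine ⟨Nat.find hexK, Nat.find_spec hexK, ?_⟩
    rcases Nat.eq_zero_or_pos (Nat.find hexK) with h0 | hpos
    · rw [h0]; simp; linarith
    · obtain ⟨j, hj⟩ : ∃ j, Nat.find hexK = j + 1 :=
        ⟨Nat.find hexK - 1, (Nat.succ_pred_eq_of_pos hpos).symm⟩
      have hjlt : (2:ℝ) ^ j * ε < 1 := by
        have h := Nat.find_min hexK (show j < Nat.find hexK by omega)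
        push_neg at h
        exact h
      have hp : (2:ℝ) ^ Nat.find hexK = 2 * 2 ^ j := by rw [hj, pow_succ]; ring
      rw [hp]
      nlinarith
  -- set inclusion
  have hsub : {ω | B₁ ω * B₂ ω * Z₃ ω ≤ ε} ⊆
      ({ω | B₂ ω * Z₃ ω ≤ ε} ∪ {ω | B₁ ω ≤ ε}) ∪
      ⋃ k ∈ Finset.range K,
        ({ω | B₂ ω * Z₃ ω ≤ 2 ^ (k + 1) * ε} ∩ {ω | B₁ ω ≤ (1 / 2) ^ k}) := by
    intro ω hω
    simp only [Set.mem_setOf_eq] at hω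
    by_cases hW : B₂ ω * Z₃ ω ≤ ε
    · exact Or.inl (Or.inl hW)
    by_cases hB : B₁ ω ≤ ε
    · exact Or.inl (Or.inr hB)
    push_neg at hW hB
    right
    have hωassoc : B₁ ω * (B₂ ω * Z₃ ω) ≤ ε := by rw [← mul_assoc]; exact hω
    obtain ⟨k, hklow, hkhigh⟩ : ∃ k : ℕ, (2:ℝ) ^ k * ε < B₂ ω * Z₃ ω ∧
        B₂ ω * Z₃ ω ≤ (2:ℝ) ^ (k + 1) * ε := by
      have hexn : ∃ n : ℕ, B₂ ω * Z₃ ω ≤ (2:ℝ) ^ n * ε := by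
        obtain ⟨n, hn⟩ := pow_unbounded_of_one_lt ((B₂ ω * Z₃ ω) / ε) (one_lt_two (α := ℝ))
        exact ⟨n, by rw [div_lt_iff₀ hε] at hn; linarith⟩
      have hn₀spec : B₂ ω * Z₃ ω ≤ (2:ℝ) ^ Nat.find hexn * ε := Nat.find_spec hexn
      have hn₀pos : 0 < Nat.find hexn := by
        rcases Nat.eq_zero_or_pos (Nat.find hexn) with h0 | h; swap; · exact h
        exfalso
        have h2 := hn₀spec
        rw [h0] at h2
        simp at h2
        linarith
      obtain ⟨k, hk⟩ : ∃ k, Nat.find hexn = k + 1 :=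
        ⟨Nat.find hexn - 1, (Nat.succ_pred_eq_of_pos hn₀pos).symm⟩
      refine ⟨k, ?_, by rw [← hk]; exact hn₀spec⟩
      have h3 := Nat.find_min hexn (show k < Nat.find hexn by omega)
      push_neg at h3
      exact h3
    have hkK : k < K := by
      by_contra h
      push_neg at h
      have h2k : (1:ℝ) ≤ (2:ℝ) ^ k * ε := by
        have : (2:ℝ) ^ K ≤ (2:ℝ) ^ k := pow_le_pow_right₀ (by norm_num) h
        nlinarith
      have : ε < B₁ ω * (B₂ ω * Z₃ ω) := by nlinarith
      linarith
    have hBk : B₁ ω ≤ (1 / 2 : ℝ) ^ k := by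
      by_contra h
      push_neg at h
      have hhalf : (0:ℝ) < (1 / 2 : ℝ) ^ k := by positivity
      have hcancel : (1 / 2 : ℝ) ^ k * ((2:ℝ) ^ k * ε) = ε := by
        rw [one_div, inv_pow]
        field_simp
      have := mul_lt_mul'' h hklow hhalf.le (by nlinarith)
      rw [hcancel] at this
      linarith
    exact Set.mem_biUnion (Finset.mem_range.2 hkK) ⟨hkhigh, hBk⟩
  -- measure estimate
  have hsε : Real.sqrt ε ≤ 1 := by
    rw [show (1:ℝ) = Real.sqrt 1 by simp]
    exact Real.sqrt_le_sqrt hε1.le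
  have hsε0 : 0 < Real.sqrt ε := Real.sqrt_pos.2 hε
  have hterm : ∀ k : ℕ,
      P ({ω | B₂ ω * Z₃ ω ≤ 2 ^ (k + 1) * ε} ∩ {ω | B₁ ω ≤ (1 / 2) ^ k}) ≤
      ENNReal.ofReal (C₂ * c₁ * (2 * Real.sqrt 2 * (ε * Real.sqrt ε)) * (Real.sqrt 2) ^ k) := by
    intro k
    have ha : (0:ℝ) ≤ 2 ^ (k + 1) * ε := by positivity
    have hb : (0:ℝ) ≤ (1 / 2 : ℝ) ^ k := by positivity
    rw [hprodmul]
    calc P {ω | B₂ ω * Z₃ ω ≤ 2 ^ (k + 1) * ε} * P {ω | B₁ ω ≤ (1 / 2) ^ k}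
        ≤ ENNReal.ofReal (C₂ * (2 ^ (k + 1) * ε * Real.sqrt (2 ^ (k + 1) * ε))) *
          ENNReal.ofReal (c₁ * (1 / 2) ^ k) :=
          mul_le_mul' (hWtail _ ha) (hB1tail _ hb)
      _ = ENNReal.ofReal (C₂ * (2 ^ (k + 1) * ε * Real.sqrt (2 ^ (k + 1) * ε)) *
            (c₁ * (1 / 2) ^ k)) := by
          rw [← ENNReal.ofReal_mul (by positivity)]
      _ = ENNReal.ofReal (C₂ * c₁ * (2 * Real.sqrt 2 * (ε * Real.sqrt ε)) *
            (Real.sqrt 2) ^ k) := by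
          congr 1
          rw [Real.sqrt_mul (by positivity), aux_sqrt_two_pow (k + 1)]
          have h2k : ((2:ℝ) ^ k)⁻¹ * (2:ℝ) ^ k = 1 := inv_mul_cancel₀ (by positivity)
          rw [pow_succ, pow_succ, one_div, inv_pow]
          have hsq : Real.sqrt 2 * Real.sqrt 2 = 2 := Real.mul_self_sqrt (by norm_num)
          field_simp
  have hsum : ∑ k ∈ Finset.range K,
      ENNReal.ofReal (C₂ * c₁ * (2 * Real.sqrt 2 * (ε * Real.sqrt ε)) * (Real.sqrt 2) ^ k) ≤
      ENNReal.ofReal (12 * (C₂ * c₁) * ε) := by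
    rw [← ENNReal.ofReal_sum_of_nonneg (fun k _ => by positivity)]
    apply ENNReal.ofReal_le_ofReal
    rw [← Finset.mul_sum]
    have hgeom := aux_geom_sum K
    have hKs : (Real.sqrt 2) ^ K ≤ Real.sqrt 2 / Real.sqrt ε := by
      have h2K : (2:ℝ) ^ K ≤ 2 / ε := by rw [le_div_iff₀ hε]; exact hK2
      calc (Real.sqrt 2) ^ K = Real.sqrt ((2:ℝ) ^ K) := (aux_sqrt_two_pow K).symm
        _ ≤ Real.sqrt (2 / ε) := Real.sqrt_le_sqrt h2K
        _ = Real.sqrt 2 / Real.sqrt ε := Real.sqrt_div (by norm_num) ε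
    have hsq : Real.sqrt 2 * Real.sqrt 2 = 2 := Real.mul_self_sqrt (by norm_num)
    have key : 2 * Real.sqrt 2 * (ε * Real.sqrt ε) * (3 * (Real.sqrt 2) ^ K) ≤ 12 * ε := by
      have h1 : 2 * Real.sqrt 2 * (ε * Real.sqrt ε) * (3 * (Real.sqrt 2) ^ K) ≤
          2 * Real.sqrt 2 * (ε * Real.sqrt ε) * (3 * (Real.sqrt 2 / Real.sqrt ε)) := by
        have hnn : (0:ℝ) ≤ 2 * Real.sqrt 2 * (ε * Real.sqrt ε) := by positivity
        apply mul_le_mul_of_nonneg_left _ hnn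
        linarith
      have h2 : 2 * Real.sqrt 2 * (ε * Real.sqrt ε) * (3 * (Real.sqrt 2 / Real.sqrt ε)) =
          12 * ε := by
        field_simp
        linear_combination 6 * hsq
      linarith
    calc C₂ * c₁ * (2 * Real.sqrt 2 * (ε * Real.sqrt ε)) *
          (∑ k ∈ Finset.range K, (Real.sqrt 2) ^ k)
        ≤ C₂ * c₁ * (2 * Real.sqrt 2 * (ε * Real.sqrt ε)) * (3 * (Real.sqrt 2) ^ K) := by
          apply mul_le_mul_of_nonneg_left hgeom (by positivity)
      _ = C₂ * c₁ * (2 * Real.sqrt 2 * (ε * Real.sqrt ε) * (3 * (Real.sqrt 2) ^ K)) := by ring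
      _ ≤ C₂ * c₁ * (12 * ε) := mul_le_mul_of_nonneg_left key (by positivity)
      _ = 12 * (C₂ * c₁) * ε := by ring
  calc P {ω | B₁ ω * B₂ ω * Z₃ ω ≤ ε}
      ≤ P (({ω | B₂ ω * Z₃ ω ≤ ε} ∪ {ω | B₁ ω ≤ ε}) ∪
          ⋃ k ∈ Finset.range K,
            ({ω | B₂ ω * Z₃ ω ≤ 2 ^ (k + 1) * ε} ∩ {ω | B₁ ω ≤ (1 / 2) ^ k})) :=
        measure_mono hsub
    _ ≤ P ({ω | B₂ ω * Z₃ ω ≤ ε} ∪ {ω | B₁ ω ≤ ε}) +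
        P (⋃ k ∈ Finset.range K,
            ({ω | B₂ ω * Z₃ ω ≤ 2 ^ (k + 1) * ε} ∩ {ω | B₁ ω ≤ (1 / 2) ^ k})) :=
        measure_union_le _ _
    _ ≤ (P {ω | B₂ ω * Z₃ ω ≤ ε} + P {ω | B₁ ω ≤ ε}) +
        ∑ k ∈ Finset.range K,
          P ({ω | B₂ ω * Z₃ ω ≤ 2 ^ (k + 1) * ε} ∩ {ω | B₁ ω ≤ (1 / 2) ^ k}) :=
        add_le_add (measure_union_le _ _) (measure_biUnion_finset_le _ _)
    _ ≤ (ENNReal.ofReal (C₂ * (ε * Real.sqrt ε)) + ENNReal.ofReal (c₁ * ε)) +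
        ∑ k ∈ Finset.range K,
          ENNReal.ofReal (C₂ * c₁ * (2 * Real.sqrt 2 * (ε * Real.sqrt ε)) *
            (Real.sqrt 2) ^ k) :=
        add_le_add (add_le_add (hWtail ε hε.le) (hB1tail ε hε.le))
          (Finset.sum_le_sum fun k _ => hterm k)
    _ ≤ (ENNReal.ofReal (C₂ * ε) + ENNReal.ofReal (c₁ * ε)) +
        ENNReal.ofReal (12 * (C₂ * c₁) * ε) := by
        refine add_le_add (add_le_add ?_ le_rfl) hsum
        apply ENNReal.ofReal_le_ofReal
        nlinarith [mul_nonneg (mul_nonneg hC₂.le hε.le) (sub_nonneg.2 hsε)]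
    _ = ENNReal.ofReal ((C₂ + c₁ + 12 * (C₂ * c₁)) * ε) := by
        rw [← ENNReal.ofReal_add (by positivity) (by positivity),
          ← ENNReal.ofReal_add (by positivity) (by positivity)]
        congr 1
        ring
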